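/- Let $A$ be a simple C*-algebra and let $d : M_\infty(A)_+ \to [0,\infty]$ be a dimension function. If there is a nonzero positive element $a$ of the Pedersen ideal of $A$ with $d(a) < \infty$, then $d(b) < \infty$ for all positive elements $b$ of the Pedersen ideal of $A$. -/

import Mathlib

open Filter Topology Matrix
open scoped ENNReal

/-! Basic Cuntz subequivalence and positive cut-downs in a (non-unital) C*-algebra. -/

/-- Cuntz subequivalence `a ≾ b` in a C*-algebra: there is a sequence `v n` with
`‖a - v n * b * (v n)*‖ → 0`. -/
def CuntzLE {A : Type*} [NonUnitalCStarAlgebra A] (a b : A) : Prop :=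
  ∃ v : ℕ → A, Tendsto (fun n => ‖a - v n * b * star (v n)‖) atTop (𝓝 0)

/-- The cut-down `(a - ε)₊`, obtained by applying the continuous functional calculus with the
function `t ↦ max (t - ε) 0`. -/
noncomputable def posCut {A : Type*} [NonUnitalCStarAlgebra A] [PartialOrder A]
    [StarOrderedRing A] (a : A) (ε : ℝ) : A :=
  cfcₙ (fun t : ℝ => max (t - ε) 0) a

/-- Positivity of a matrix over a star ring, i.e. of an element of a matrix algebra over a
C*-algebra: `a = cᴴ * c` for some `c`. -/
def MatPos {R : Type*} [NonUnitalRing R] [StarRing R] {ι : Type*} [Fintype ι]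
    (a : Matrix ι ι R) : Prop :=
  ∃ c : Matrix ι ι R, a = cᴴ * c

/-- Cuntz subequivalence between elements of (possibly different) matrix algebras over a
C*-algebra, phrased via convergence in the (product) topology of matrices, which agrees with the
norm topology of the matrix C*-algebra. -/
def MCuntzLE {A : Type*} [NonUnitalCStarAlgebra A] {ι κ : Type*} [Fintype ι] [Fintype κ]
    (a : Matrix ι ι A) (b : Matrix κ κ A) : Prop :=
  ∃ v : ℕ → Matrix ι κ A, Tendsto (fun n => v n * b * (v n)ᴴ) atTop (𝓝 a)

/-- The embedding of `A` as `1 × 1` matrices. -/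
def mOne {A : Type*} (a : A) : Matrix (Fin 1) (Fin 1) A := Matrix.of fun _ _ => a

/-- `n` copies `a ⊕ a ⊕ ⋯ ⊕ a` of a matrix, as a block diagonal matrix. -/
def nCopies {A : Type*} [Zero A] (n : ℕ) {ι : Type*} [Fintype ι] [DecidableEq ι]
    (a : Matrix ι ι A) : Matrix (ι × Fin n) (ι × Fin n) A :=
  Matrix.blockDiagonal fun _ : Fin n => a

/-- The Pedersen ideal of `A`: the intersection of all dense two-sided ideals (this is the
smallest dense two-sided ideal). -/
def pedersenIdeal (A : Type*) [NonUnitalCStarAlgebra A] : Set A :=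
  {a : A | ∀ I : TwoSidedIdeal A, Dense (I : Set A) → a ∈ I}

/-- A C*-algebra is simple if it is nonzero and has no nontrivial closed two-sided ideals. -/
def IsSimpleCStar (A : Type*) [NonUnitalCStarAlgebra A] : Prop :=
  (∃ a : A, a ≠ 0) ∧ ∀ I : TwoSidedIdeal A, IsClosed (I : Set A) → I = ⊥ ∨ I = ⊤

/-- A dimension function on `A`: a function on positive elements of matrix algebras over `A`
(i.e. on `M_∞(A)₊`), additive on direct sums and order preserving for Cuntz subequivalence. -/
structure DimFn (A : Type*) [NonUnitalCStarAlgebra A] where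
  d : ∀ (ι : Type) [Fintype ι], Matrix ι ι A → ℝ≥0∞
  additive : ∀ (ι κ : Type) [Fintype ι] [Fintype κ] (a : Matrix ι ι A) (b : Matrix κ κ A),
    MatPos a → MatPos b →
      d (ι ⊕ κ) (Matrix.fromBlocks a 0 0 b) = d ι a + d κ b
  mono : ∀ (ι κ : Type) [Fintype ι] [Fintype κ] (a : Matrix ι ι A) (b : Matrix κ κ A),
    MatPos a → MatPos b → MCuntzLE a b → d ι a ≤ d κ b


noncomputable def gfun (ε : ℝ) (t : ℝ) : ℝ := Real.sqrt (max t 0) / (max t 0 + ε)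

noncomputable def kfun (ε : ℝ) (t : ℝ) : ℝ := gfun ε t * t * gfun ε t

noncomputable def sqfun (ε : ℝ) (t : ℝ) : ℝ := Real.sqrt (1 - kfun ε t)

lemma gfun_cont {ε : ℝ} (hε : 0 < ε) : Continuous (gfun ε) := by
  apply Continuous.div (by fun_prop) (by fun_prop)
  intro x; positivity

lemma kfun_cont {ε : ℝ} (hε : 0 < ε) : Continuous (kfun ε) := by
  unfold kfun
  exact ((gfun_cont hε).mul continuous_id).mul (gfun_cont hε)

lemma sqfun_cont {ε : ℝ} (hε : 0 < ε) : Continuous (sqfun ε) := by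
  unfold sqfun
  exact Real.continuous_sqrt.comp (continuous_const.sub (kfun_cont hε))

lemma gfun_zero {ε : ℝ} : gfun ε 0 = 0 := by simp [gfun]

lemma kfun_eq {ε x : ℝ} (hx : 0 ≤ x) : kfun ε x = x ^ 2 / (x + ε) ^ 2 := by
  unfold kfun gfun
  rw [max_eq_left hx]
  have h : Real.sqrt x ^ 2 = x := Real.sq_sqrt hx
  calc Real.sqrt x / (x + ε) * x * (Real.sqrt x / (x + ε))
      = Real.sqrt x ^ 2 * x * ((x + ε)⁻¹) ^ 2 := by
        rw [div_eq_mul_inv]; ring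
    _ = x ^ 2 / (x + ε) ^ 2 := by rw [h, inv_pow, ← div_eq_mul_inv, pow_two x]

lemma kfun_bounds {ε x : ℝ} (hε : 0 < ε) (hx : 0 ≤ x) :
    0 ≤ kfun ε x ∧ kfun ε x ≤ 1 ∧ x * (1 - kfun ε x) ≤ 3 * ε := by
  rw [kfun_eq hx]
  have hd : 0 < (x + ε) ^ 2 := by positivity
  refine ⟨by positivity, ?_, ?_⟩
  · rw [div_le_one hd]; nlinarith
  · have h1 : 1 - x ^ 2 / (x + ε) ^ 2 = ((x + ε) ^ 2 - x ^ 2) / (x + ε) ^ 2 := by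
      field_simp
    rw [h1, ← mul_div_assoc, div_le_iff₀ hd]
    nlinarith [sq_nonneg x, sq_nonneg ε, mul_nonneg hx hε.le]

section UnitalEst

variable {U : Type*} [CStarAlgebra U] [PartialOrder U] [StarOrderedRing U]

lemma cfc_conj_self (f : ℝ → ℝ) (c : U) (hf : Continuous f) (hc : IsSelfAdjoint c) :
    cfc f c * c * cfc f c = cfc (fun x => f x * x * f x) c := by
  have e1 : cfc (fun x : ℝ => f x * x * f x) c
      = cfc (fun x : ℝ => f x * x) c * cfc f c :=
    cfc_mul _ _ c (by fun_prop) hf.continuousOn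
  have e2 : cfc (fun x : ℝ => f x * x) c = cfc f c * cfc (id : ℝ → ℝ) c :=
    cfc_mul _ _ c hf.continuousOn continuousOn_id
  rw [e1, e2, cfc_id ℝ c]

lemma unital_est (β b c : U) (hβ : 0 ≤ β) (hβb : β * β = b) (hc : 0 ≤ c) (hbc : b ≤ c)
    {ε : ℝ} (hε : 0 < ε) :
    ‖b - (β * cfc (gfun ε) c) * c * star (β * cfc (gfun ε) c)‖ ≤ 3 * ε := by
  have hβsa : star β = β := (IsSelfAdjoint.of_nonneg hβ).star_eq
  have hb : 0 ≤ b := by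
    rw [← hβb]; nth_rewrite 1 [← hβsa]; exact star_mul_self_nonneg β
  have hcsa : IsSelfAdjoint c := .of_nonneg hc
  have hσ : ∀ x ∈ spectrum ℝ c, 0 ≤ x := fun x hx => spectrum_nonneg_of_nonneg hc hx
  set w := cfc (gfun ε) c with hw
  have hwsa : star w = w := (cfc_predicate (gfun ε) c).star_eq
  have h1 : w * c * w = cfc (kfun ε) c := cfc_conj_self _ c (gfun_cont hε) hcsa
  have honele : ∀ x ∈ spectrum ℝ c, 0 ≤ 1 - kfun ε x := fun x hx =>
    sub_nonneg.mpr ((kfun_bounds hε (hσ x hx)).2.1)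
  set μ := cfc (sqfun ε) c with hμdef
  have hμsa : star μ = μ := (cfc_predicate (sqfun ε) c).star_eq
  have hμ : 0 ≤ μ := cfc_nonneg (fun x _ => Real.sqrt_nonneg _)
  have hμμ : μ * μ = 1 - cfc (kfun ε) c := by
    rw [hμdef, ← cfc_mul _ _ c (sqfun_cont hε).continuousOn (sqfun_cont hε).continuousOn]
    have e : cfc (fun x => sqfun ε x * sqfun ε x) c = cfc (fun x => 1 - kfun ε x) c :=
      cfc_congr fun x hx => Real.mul_self_sqrt (honele x hx)
    rw [e, cfc_sub _ _ c continuousOn_const (kfun_cont hε).continuousOn, cfc_const 1 c, _root_.map_one]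
  have hEeq : b - (β * w) * c * star (β * w) = star (μ * β) * (μ * β) := by
    rw [StarMul.star_mul, StarMul.star_mul, hμsa, hβsa, hwsa]
    rw [show β * w * c * (w * β) = β * (w * c * w) * β from by noncomm_ring, h1,
      show β * μ * (μ * β) = β * (μ * μ) * β from by noncomm_ring, hμμ,
      mul_one_sub, sub_mul, hβb]
  rw [hEeq, CStarRing.norm_star_mul_self]
  rw [show ‖μ * β‖ * ‖μ * β‖ = ‖(μ * β) * star (μ * β)‖ from (CStarRing.norm_self_mul_star).symm]
  rw [StarMul.star_mul, hμsa, hβsa, show μ * β * (β * μ) = μ * b * μ from by rw [← hβb]; noncomm_ring]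
  have h4 : μ * b * μ ≤ μ * c * μ := by
    have := star_left_conjugate_le_conjugate hbc μ
    rwa [hμsa] at this
  have h5 : 0 ≤ μ * b * μ := by
    have := star_left_conjugate_nonneg hb μ
    rwa [hμsa] at this
  refine (CStarAlgebra.norm_le_norm_of_nonneg_of_le h5 h4).trans ?_
  rw [cfc_conj_self _ c (sqfun_cont hε) hcsa]
  apply norm_cfc_le (by positivity)
  intro x hx
  have hx0 := hσ x hx
  have e : sqfun ε x * x * sqfun ε x = x * (1 - kfun ε x) := by
    rw [show sqfun ε x * x * sqfun ε x = x * (sqfun ε x * sqfun ε x) from by ring,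
      show sqfun ε x * sqfun ε x = 1 - kfun ε x from
        Real.mul_self_sqrt (sub_nonneg.mpr (kfun_bounds hε hx0).2.1)]
  rw [e, Real.norm_eq_abs, abs_of_nonneg
    (mul_nonneg hx0 (sub_nonneg.mpr (kfun_bounds hε hx0).2.1))]
  exact (kfun_bounds hε hx0).2.2

end UnitalEst

section NonUnital

variable {A : Type*} [NonUnitalCStarAlgebra A] [PartialOrder A] [StarOrderedRing A]

lemma cfcₙ_conj_self (f : ℝ → ℝ) (c : A) (hf : Continuous f) (hf0 : f 0 = 0)
    (hc : IsSelfAdjoint c) :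
    cfcₙ f c * c * cfcₙ f c = cfcₙ (fun x => f x * x * f x) c := by
  have e1 : cfcₙ (fun x : ℝ => f x * x * f x) c
      = cfcₙ (fun x : ℝ => f x * x) c * cfcₙ f c :=
    cfcₙ_mul _ _ c (by fun_prop) (by simp [hf0]) hf.continuousOn hf0
  have e2 : cfcₙ (fun x : ℝ => f x * x) c = cfcₙ f c * cfcₙ (id : ℝ → ℝ) c :=
    cfcₙ_mul _ _ c hf.continuousOn hf0 continuousOn_id rfl
  rw [e1, e2, cfcₙ_id ℝ c]

open Unitization in
lemma key_est (b c : A) (hb : 0 ≤ b) (hbc : b ≤ c) {ε : ℝ} (hε : 0 < ε) :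
    ‖b - (CFC.sqrt b * cfcₙ (gfun ε) c) * c * star (CFC.sqrt b * cfcₙ (gfun ε) c)‖ ≤ 3 * ε := by
  have hc : 0 ≤ c := hb.trans hbc
  rw [← Unitization.norm_inr (𝕜 := ℂ)]
  simp only [Unitization.inr_sub, Unitization.inr_mul, Unitization.inr_star]
  rw [Unitization.real_cfcₙ_eq_cfc_inr c (gfun ε) gfun_zero]
  exact unital_est _ _ _ (inr_nonneg_iff.mpr (CFC.sqrt_nonneg b))
    (by rw [← Unitization.inr_mul, CFC.sqrt_mul_sqrt_self b hb])
    (inr_nonneg_iff.mpr hc)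
    ((inr_le_iff b c (.of_nonneg hb) (.of_nonneg hc)).mpr hbc) hε

lemma cuntz_of_le (b c : A) (hb : 0 ≤ b) (hbc : b ≤ c) :
    ∃ v : ℕ → A, Filter.Tendsto (fun n => v n * c * star (v n)) Filter.atTop (nhds b) := by
  refine ⟨fun n => CFC.sqrt b * cfcₙ (gfun (1/(n+1))) c, ?_⟩
  rw [tendsto_iff_norm_sub_tendsto_zero]
  apply squeeze_zero (fun n => norm_nonneg _) (g := fun n : ℕ => 3 * (1/(n+1)))
  · intro n
    rw [norm_sub_rev]
    exact key_est b c hb hbc (by positivity)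
  · simpa using (tendsto_one_div_add_atTop_nhds_zero_nat (𝕜 := ℝ)).const_mul 3

noncomputable def locUnit (a : A) (n : ℕ) : A := cfcₙ (fun t : ℝ => min ((n + 1) * t) 1) a

lemma tendsto_locUnit (a : A) (ha : 0 ≤ a) :
    Filter.Tendsto (fun n => locUnit a n * a * locUnit a n) Filter.atTop (nhds a) := by
  have hasa : IsSelfAdjoint a := .of_nonneg ha
  have key : ∀ n : ℕ, locUnit a n * a * locUnit a n
      = cfcₙ (fun t : ℝ => min ((n + 1) * t) 1 * t * min ((n + 1) * t) 1) a := fun n =>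
    cfcₙ_conj_self _ a (by fun_prop) (by simp) hasa
  rw [tendsto_iff_norm_sub_tendsto_zero]
  apply squeeze_zero (fun n => norm_nonneg _) (g := fun n : ℕ => 1/(n+1))
  · intro n
    rw [key n]
    rw [show cfcₙ (fun t : ℝ => min ((n + 1) * t) 1 * t * min ((n + 1) * t) 1) a - a
        = cfcₙ (fun t : ℝ => min ((n + 1) * t) 1 * t * min ((n + 1) * t) 1 - t) a from by
      rw [cfcₙ_sub (fun t : ℝ => min ((n + 1) * t) 1 * t * min ((n + 1) * t) 1) (fun t : ℝ => t) a
        (by fun_prop) (by simp) (by fun_prop) rfl, cfcₙ_id' ℝ a]]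
    apply norm_cfcₙ_le
    intro x hx
    have hx0 : 0 ≤ x := quasispectrum_nonneg_of_nonneg a ha x hx
    have hmem : min (((n : ℝ) + 1) * x) 1 ∈ Set.Icc (0:ℝ) 1 := by
      constructor
      · exact le_min (by positivity) zero_le_one
      · exact min_le_right _ _
    rw [Real.norm_eq_abs]
    rw [show min (((n:ℝ) + 1) * x) 1 * x * min (((n:ℝ) + 1) * x) 1 - x
        = -(x * (1 - min (((n:ℝ) + 1) * x) 1 * min (((n:ℝ) + 1) * x) 1)) from by ring, abs_neg]
    have h1 : 0 ≤ 1 - min (((n:ℝ) + 1) * x) 1 * min (((n:ℝ) + 1) * x) 1 := by nlinarith [hmem.1, hmem.2]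
    rw [abs_of_nonneg (mul_nonneg hx0 h1)]
    rcases le_or_gt x (1/(n+1)) with hc | hc
    · calc x * (1 - min (((n:ℝ) + 1) * x) 1 * min (((n:ℝ) + 1) * x) 1) ≤ x * 1 := by nlinarith [hmem.1, hmem.2]
        _ ≤ 1/(n+1) := by linarith
    · have hnx : (1:ℝ) ≤ ((n:ℝ) + 1) * x := by
        rw [div_lt_iff₀ (by positivity)] at hc
        nlinarith
      rw [min_eq_right hnx]
      simp only [mul_one, sub_self, mul_zero]
      positivity
  · exact tendsto_one_div_add_atTop_nhds_zero_nat

end NonUnital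

section Ideal

variable {A : Type*} [NonUnitalCStarAlgebra A] [PartialOrder A] [StarOrderedRing A]

def idealCarrier (a : A) : Set A :=
  {x | ∃ (n : ℕ) (f g : Fin n → A), x = ∑ j, f j * a * g j}

lemma idealCarrier_zero (a : A) : (0:A) ∈ idealCarrier a :=
  ⟨0, (fun j => 0), (fun j => 0), by simp⟩

lemma idealCarrier_add {a x y : A} (hx : x ∈ idealCarrier a) (hy : y ∈ idealCarrier a) :
    x + y ∈ idealCarrier a := by
  obtain ⟨n, f, g, rfl⟩ := hx
  obtain ⟨m, f', g', rfl⟩ := hy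
  refine ⟨n + m, Fin.append f f', Fin.append g g', ?_⟩
  rw [Fin.sum_univ_add]
  simp [Fin.append_left, Fin.append_right]

lemma idealCarrier_neg {a x : A} (hx : x ∈ idealCarrier a) : -x ∈ idealCarrier a := by
  obtain ⟨n, f, g, rfl⟩ := hx
  exact ⟨n, fun j => -f j, g, by simp [neg_mul, Finset.sum_neg_distrib]⟩

lemma idealCarrier_mul_left {a x y : A} (hy : y ∈ idealCarrier a) :
    x * y ∈ idealCarrier a := by
  obtain ⟨n, f, g, rfl⟩ := hy
  exact ⟨n, fun j => x * f j, g, by rw [Finset.mul_sum]; simp [mul_assoc]⟩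

lemma idealCarrier_mul_right {a x y : A} (hx : x ∈ idealCarrier a) :
    x * y ∈ idealCarrier a := by
  obtain ⟨n, f, g, rfl⟩ := hx
  exact ⟨n, f, fun j => g j * y, by rw [Finset.sum_mul]; simp [mul_assoc]⟩

noncomputable def genIdeal (a : A) : TwoSidedIdeal A :=
  TwoSidedIdeal.mk' (idealCarrier a) (idealCarrier_zero a)
    (fun hx hy => idealCarrier_add hx hy) (fun hx => idealCarrier_neg hx)
    (fun hy => idealCarrier_mul_left hy) (fun hx => idealCarrier_mul_right hx)

noncomputable def genIdealCl (a : A) : TwoSidedIdeal A :=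
  TwoSidedIdeal.mk' (closure (idealCarrier a))
    (subset_closure (idealCarrier_zero a))
    (fun hx hy => map_mem_closure₂ continuous_add hx hy
      (fun _ hx' _ hy' => idealCarrier_add hx' hy'))
    (fun hx => map_mem_closure continuous_neg hx (fun _ h => idealCarrier_neg h))
    (fun {x y} hy => map_mem_closure (f := fun z => x * z) (by fun_prop) hy
      (fun z hz => idealCarrier_mul_left hz))
    (fun {x y} hx => map_mem_closure (f := fun z => z * y) (by fun_prop) hx
      (fun z hz => idealCarrier_mul_right hz))

lemma rep_of_pedersen' (hA : IsSimpleCStar A) {a : A} (ha : 0 ≤ a) (hane : a ≠ 0)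
    {b : A} (hbP : ∀ I : TwoSidedIdeal A, Dense (I : Set A) → b ∈ I) :
    ∃ (n : ℕ) (f g : Fin n → A), b = ∑ j, f j * a * g j := by
  have hmem : a ∈ closure (idealCarrier a) := by
    refine mem_closure_of_tendsto (tendsto_locUnit a ha) ?_
    filter_upwards with n
    exact ⟨1, fun _ => locUnit a n, fun _ => locUnit a n, by simp⟩
  have hcoe : (genIdealCl a : Set A) = closure (idealCarrier a) :=
    TwoSidedIdeal.coe_mk' _ _ _ _ _ _
  have hmemCl : ∀ x : A, x ∈ genIdealCl a ↔ x ∈ closure (idealCarrier a) := fun x =>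
    TwoSidedIdeal.mem_mk' _ _ _ _ _ _ x
  have hmemI : ∀ x : A, x ∈ genIdeal a ↔ x ∈ idealCarrier a := fun x =>
    TwoSidedIdeal.mem_mk' _ _ _ _ _ _ x
  have hcoeI : (genIdeal a : Set A) = idealCarrier a :=
    TwoSidedIdeal.coe_mk' _ _ _ _ _ _
  have hcl : IsClosed ((genIdealCl a : Set A)) := by
    rw [hcoe]; exact isClosed_closure
  rcases hA.2 (genIdealCl a) hcl with h | h
  · exfalso
    apply hane
    have : a ∈ genIdealCl a := (hmemCl a).mpr hmem
    rw [h] at this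
    exact (TwoSidedIdeal.mem_bot A).mp this
  · have hdense : Dense (genIdeal a : Set A) := by
      rw [dense_iff_closure_eq]
      apply Set.eq_univ_iff_forall.mpr
      intro x
      have : x ∈ genIdealCl a := h ▸ TwoSidedIdeal.mem_top A
      rw [hcoeI]
      exact (hmemCl x).mp this
    have := hbP (genIdeal a) hdense
    rwa [hmemI] at this

lemma exists_cuntz_sum (hA : IsSimpleCStar A) {a : A} (ha : 0 ≤ a) (hane : a ≠ 0)
    {b : A} (hb : 0 ≤ b) (hbP : ∀ I : TwoSidedIdeal A, Dense (I : Set A) → b ∈ I) :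
    ∃ (N : ℕ) (v : ℕ → Fin N → A),
      Filter.Tendsto (fun n => ∑ j, v n j * a * star (v n j)) Filter.atTop (nhds b) := by
  obtain ⟨N, f, g, hb_eq⟩ := rep_of_pedersen' hA ha hane hbP
  have hasa : star a = a := (IsSelfAdjoint.of_nonneg ha).star_eq
  have hbsa : star b = b := (IsSelfAdjoint.of_nonneg hb).star_eq
  set p : Fin N → A := fun j => f j + star (g j) with hp
  set c : A := ∑ j, p j * a * star (p j) with hcdef
  have hc : 0 ≤ c := Finset.sum_nonneg (fun j _ => star_right_conjugate_nonneg ha (p j))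
  set q : A := ∑ j, (f j * a * star (f j) + star (g j) * a * g j) with hq
  have hq0 : 0 ≤ q := Finset.sum_nonneg fun j _ =>
    add_nonneg (star_right_conjugate_nonneg ha (f j)) (star_left_conjugate_nonneg ha (g j))
  have hcsum : c = b + star b + q := by
    rw [hcdef, hq, hb_eq, star_sum]
    rw [← Finset.sum_add_distrib, ← Finset.sum_add_distrib]
    refine Finset.sum_congr rfl fun j _ => ?_
    simp only [hp, star_add, star_star, StarMul.star_mul, hasa]
    noncomm_ring
  have hbc : b ≤ c := by
    rw [hcsum, hbsa]
    calc b ≤ b + (b + q) := le_add_of_nonneg_right (add_nonneg hb hq0)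
      _ = b + b + q := by rw [add_assoc]
  obtain ⟨v, hv⟩ := cuntz_of_le b c hb hbc
  refine ⟨N, fun n j => v n * p j, ?_⟩
  have he : ∀ n, ∑ j, (v n * p j) * a * star (v n * p j) = v n * c * star (v n) := by
    intro n
    rw [hcdef, Finset.mul_sum, Finset.sum_mul]
    exact Finset.sum_congr rfl fun j _ => by simp only [StarMul.star_mul]; noncomm_ring
  simpa only [he] using hv

end Ideal

section MatrixPart

variable {A : Type*} [NonUnitalCStarAlgebra A] [PartialOrder A] [StarOrderedRing A]

lemma matPos_mOne (b : A) (hb : 0 ≤ b) : MatPos (mOne b) := by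
  refine ⟨mOne (CFC.sqrt b), ?_⟩
  ext i j
  simp only [mOne, Matrix.conjTranspose_apply, Matrix.mul_apply, Matrix.of_apply,
    Fin.sum_univ_one]
  rw [(IsSelfAdjoint.of_nonneg (CFC.sqrt_nonneg b)).star_eq, CFC.sqrt_mul_sqrt_self b hb]

lemma matPos_diag {a : A} (ha : 0 ≤ a) (ι : Type) [Fintype ι] [DecidableEq ι] :
    MatPos (Matrix.diagonal fun _ : ι => a) := by
  refine ⟨Matrix.diagonal fun _ => CFC.sqrt a, ?_⟩
  rw [Matrix.diagonal_conjTranspose, Matrix.diagonal_mul_diagonal]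
  congr 1
  funext i
  simp only [Pi.star_apply]
  rw [(IsSelfAdjoint.of_nonneg (CFC.sqrt_nonneg a)).star_eq, CFC.sqrt_mul_sqrt_self a ha]

lemma mcuntz_mOne_diag {a b : A} {N : ℕ} {v : ℕ → Fin N → A}
    (hv : Filter.Tendsto (fun n => ∑ j, v n j * a * star (v n j)) Filter.atTop (nhds b)) :
    MCuntzLE (mOne b) (Matrix.diagonal fun _ : Fin N => a) := by
  refine ⟨fun n => Matrix.of fun _ j => v n j, ?_⟩
  have hentry : ∀ n (i k : Fin 1),
      ((Matrix.of fun _ j => v n j) * (Matrix.diagonal fun _ : Fin N => a)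
        * (Matrix.of fun _ j => v n j)ᴴ) i k = ∑ j, v n j * a * star (v n j) := by
    intro n i k
    rw [Matrix.mul_apply]
    refine Finset.sum_congr rfl fun j _ => ?_
    rw [Matrix.mul_diagonal]
    simp [Matrix.conjTranspose_apply]
  refine tendsto_pi_nhds.mpr ?_
  intro i
  rw [tendsto_pi_nhds]
  intro k
  have : (fun n => ((Matrix.of fun _ j => v n j) * (Matrix.diagonal fun _ : Fin N => a)
      * (Matrix.of fun _ j => v n j)ᴴ) i k) = fun n => ∑ j, v n j * a * star (v n j) := by
    funext n; exact hentry n i k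
  rw [this]
  exact hv

lemma locUnit_star (a : A) (n : ℕ) : star (locUnit a n) = locUnit a n :=
  IsSelfAdjoint.star_eq (cfcₙ_predicate _ a)

lemma mcuntz_diag_reindex {a : A} (ha : 0 ≤ a) {ι κ : Type} [Fintype ι] [Fintype κ]
    [DecidableEq ι] [DecidableEq κ] (e : ι ≃ κ) :
    MCuntzLE (Matrix.diagonal fun _ : ι => a) (Matrix.diagonal fun _ : κ => a) := by
  refine ⟨fun n => Matrix.of fun i k => if e i = k then locUnit a n else 0, ?_⟩
  have hentry : ∀ n (i i' : ι),
      ((Matrix.of fun i k => if e i = k then locUnit a n else 0)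
        * (Matrix.diagonal fun _ : κ => a)
        * (Matrix.of fun i k => if e i = k then locUnit a n else 0)ᴴ) i i'
      = if i = i' then locUnit a n * a * locUnit a n else 0 := by
    intro n i i'
    rw [Matrix.mul_apply]
    rcases eq_or_ne i i' with rfl | hne
    · rw [if_pos rfl]
      rw [Finset.sum_eq_single (e i)]
      · rw [Matrix.mul_diagonal]
        simp [Matrix.conjTranspose_apply, locUnit_star]
      · intro k _ hk
        rw [Matrix.mul_diagonal]
        simp only [Matrix.conjTranspose_apply, Matrix.of_apply]
        rw [if_neg (fun h => hk h.symm)]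
        simp
      · intro h
        exact absurd (Finset.mem_univ _) h
    · rw [if_neg hne]
      apply Finset.sum_eq_zero
      intro k _
      rw [Matrix.mul_diagonal]
      simp only [Matrix.conjTranspose_apply, Matrix.of_apply]
      rcases eq_or_ne (e i) k with rfl | hik
      · rw [if_neg (fun h : e i' = e i => hne (e.injective h.symm))]
        simp
      · rw [if_neg hik]
        simp
  refine tendsto_pi_nhds.mpr ?_
  intro i
  rw [tendsto_pi_nhds]
  intro i'
  have heq : (fun n => ((Matrix.of fun i k => if e i = k then locUnit a n else 0)
      * (Matrix.diagonal fun _ : κ => a)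
      * (Matrix.of fun i k => if e i = k then locUnit a n else 0)ᴴ) i i')
      = fun n => if i = i' then locUnit a n * a * locUnit a n else 0 := by
    funext n; exact hentry n i i'
  rw [heq]
  rcases eq_or_ne i i' with rfl | hne
  · simp only [if_pos rfl, Matrix.diagonal_apply_eq]
    exact tendsto_locUnit a ha
  · simp only [if_neg hne, Matrix.diagonal_apply_ne _ hne]
    exact tendsto_const_nhds

lemma mcuntz_diag_zero {a : A} : MCuntzLE (Matrix.diagonal fun _ : Fin 0 => a) (mOne a) := by
  refine ⟨fun _ => 0, ?_⟩
  have : ∀ M M' : Matrix (Fin 0) (Fin 0) A, M = M' := fun M M' => by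
    ext i; exact i.elim0
  have h : (fun _ : ℕ => (0 : Matrix (Fin 0) (Fin 1) A) * mOne a
      * (0 : Matrix (Fin 0) (Fin 1) A)ᴴ) = fun _ => Matrix.diagonal fun _ : Fin 0 => a :=
    funext fun n => this _ _
  rw [show (fun n : ℕ => (fun _ : ℕ => (0 : Matrix (Fin 0) (Fin 1) A)) n * mOne a
      * ((fun _ : ℕ => (0 : Matrix (Fin 0) (Fin 1) A)) n)ᴴ)
      = fun _ => Matrix.diagonal fun _ : Fin 0 => a from funext fun n => this _ _]
  exact tendsto_const_nhds

lemma matPos_fin0 (M : Matrix (Fin 0) (Fin 0) A) : MatPos M :=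
  ⟨0, by ext i; exact i.elim0⟩

lemma diag_fin1_eq_mOne (a : A) : (Matrix.diagonal fun _ : Fin 1 => a) = mOne a := by
  ext i j
  have : i = j := Subsingleton.elim i j
  subst this
  simp [mOne]

lemma dQ_lt_top (d : DimFn A) {a : A} (ha : 0 ≤ a)
    (hfin : d.d (Fin 1) (mOne a) < ⊤) (n : ℕ) :
    d.d (Fin n) (Matrix.diagonal fun _ : Fin n => a) < ⊤ := by
  induction n with
  | zero =>
    refine lt_of_le_of_lt ?_ hfin
    exact d.mono _ _ _ _ (matPos_fin0 _) (matPos_mOne a ha) mcuntz_diag_zero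
  | succ n ih =>
    have hsum : (Matrix.fromBlocks (Matrix.diagonal fun _ : Fin n => a) 0 0
        (Matrix.diagonal fun _ : Fin 1 => a))
        = (Matrix.diagonal fun _ : Fin n ⊕ Fin 1 => a) := by
      rw [Matrix.fromBlocks_diagonal]
      congr 1
      funext i
      cases i <;> rfl
    have step1 : d.d (Fin (n+1)) (Matrix.diagonal fun _ : Fin (n+1) => a)
        ≤ d.d (Fin n ⊕ Fin 1) (Matrix.diagonal fun _ : Fin n ⊕ Fin 1 => a) :=
      d.mono _ _ _ _ (matPos_diag ha _) (matPos_diag ha _)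
        (mcuntz_diag_reindex ha (finSumFinEquiv (m := n) (n := 1)).symm)
    have step2 : d.d (Fin n ⊕ Fin 1) (Matrix.diagonal fun _ : Fin n ⊕ Fin 1 => a)
        = d.d (Fin n) (Matrix.diagonal fun _ : Fin n => a)
          + d.d (Fin 1) (Matrix.diagonal fun _ : Fin 1 => a) := by
      rw [← hsum]
      exact d.additive _ _ _ _ (matPos_diag ha _) (matPos_diag ha _)
    refine lt_of_le_of_lt (step1.trans_eq step2) ?_
    rw [diag_fin1_eq_mOne]
    exact ENNReal.add_lt_top.mpr ⟨ih, hfin⟩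

end MatrixPart

/-- If a nonzero positive element of the Pedersen ideal of a simple C*-algebra has finite
dimension under a dimension function, then so does every positive element of the Pedersen
ideal. -/
theorem stmt_8 {A : Type*} [NonUnitalCStarAlgebra A] [PartialOrder A] [StarOrderedRing A]
    (hA : IsSimpleCStar A) (d : DimFn A)
    (a : A) (haP : a ∈ pedersenIdeal A) (hapos : 0 ≤ a) (hane : a ≠ 0)
    (hfin : d.d (Fin 1) (mOne a) < ⊤) :
    ∀ b : A, b ∈ pedersenIdeal A → 0 ≤ b → d.d (Fin 1) (mOne b) < ⊤ := by
  intro b hbP hb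
  obtain ⟨N, v, hv⟩ := exists_cuntz_sum hA hapos hane hb (fun I hI => hbP I hI)
  have h1 : d.d (Fin 1) (mOne b) ≤ d.d (Fin N) (Matrix.diagonal fun _ : Fin N => a) :=
    d.mono _ _ _ _ (matPos_mOne b hb) (matPos_diag hapos _) (mcuntz_mOne_diag hv)
  exact lt_of_le_of_lt h1 (dQ_lt_top d hapos hfin N)
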